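/- Let M be an f-matching and suppose every augmenting trail for M has length at least s. If M* is any f-matching, then the number of edge-disjoint augmenting trails needed to transform M into a maximum f-matching obtained from M* satisfies: the number of such trails is at most f(V)/(s−1), where f(V) = Σ_v f(v). In particular, if s ≥ √(f(V)) + 1, then |M*| − |M| ≤ 2√(f(V)). -/

import Mathlib

structure Multigraph (V E : Type) where
  fst : E → V
  snd : E → V

structure MWalk (V E : Type) where
  len : ℕ
  vs : ℕ → V
  es : ℕ → E

variable {V E : Type}

def Multigraph.links (G : Multigraph V E) (e : E) (u v : V) : Prop :=
  (G.fst e = u ∧ G.snd e = v) ∨ (G.fst e = v ∧ G.snd e = u)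

def MWalk.IsWalk (G : Multigraph V E) (W : MWalk V E) : Prop :=
  ∀ i < W.len, G.links (W.es i) (W.vs i) (W.vs (i+1))

/-- A trail is a walk with no repeated edges. -/
def MWalk.IsTrail (G : Multigraph V E) (W : MWalk V E) : Prop :=
  W.IsWalk G ∧ ∀ i < W.len, ∀ j < W.len, W.es i = W.es j → i = j

/-- Degree of `v` in the edge set `M` (loops counted twice). -/
def Multigraph.deg [DecidableEq V] [DecidableEq E] (G : Multigraph V E)
    (M : Finset E) (v : V) : ℕ :=
  (M.filter (fun e => G.fst e = v)).card + (M.filter (fun e => G.snd e = v)).card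

/-- An `f`-matching: every vertex `v` has degree at most `f v`. -/
def Multigraph.IsFMatching [DecidableEq V] [DecidableEq E] (G : Multigraph V E)
    (f : V → ℕ) (M : Finset E) : Prop :=
  ∀ v, G.deg M v ≤ f v

def MWalk.edgeSet [DecidableEq E] (W : MWalk V E) : Finset E :=
  (Finset.range W.len).image W.es

/-- Consecutive edges alternate between `M` and its complement. -/
def MWalk.Alternating [DecidableEq E] (W : MWalk V E) (M : Finset E) : Prop :=
  ∀ i, i + 1 < W.len → ((W.es i ∈ M) ↔ W.es (i+1) ∉ M)

/-- An augmenting trail: an alternating trail that starts and ends with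
unmatched edges at free (deficient) vertices; if closed, the total endpoint
deficiency is at least 2. -/
def IsAugTrail [DecidableEq V] [DecidableEq E] (G : Multigraph V E) (f : V → ℕ)
    (M : Finset E) (W : MWalk V E) : Prop :=
  W.IsTrail G ∧ 1 ≤ W.len ∧ W.len % 2 = 1 ∧ W.Alternating M ∧
  W.es 0 ∉ M ∧ W.es (W.len - 1) ∉ M ∧
  G.deg M (W.vs 0) < f (W.vs 0) ∧ G.deg M (W.vs W.len) < f (W.vs W.len) ∧
  (W.vs 0 = W.vs W.len → G.deg M (W.vs 0) + 2 ≤ f (W.vs 0))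

/-- A shortest augmenting trail (sat). -/
def IsSAT [DecidableEq V] [DecidableEq E] (G : Multigraph V E) (f : V → ℕ)
    (M : Finset E) (W : MWalk V E) : Prop :=
  IsAugTrail G f M W ∧ ∀ W' : MWalk V E, IsAugTrail G f M W' → W.len ≤ W'.len



set_option linter.unusedSectionVars false

namespace Stmt2Aux

open Finset

variable {V E : Type} [DecidableEq V] [DecidableEq E]

def sd (A B : Finset E) : Finset E := (A \ B) ∪ (B \ A)

lemma mem_sd {A B : Finset E} {e : E} :
    e ∈ sd A B ↔ ((e ∈ A ∧ e ∉ B) ∨ (e ∈ B ∧ e ∉ A)) := by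
  simp [sd, Finset.mem_union, Finset.mem_sdiff]

lemma links_symm {G : Multigraph V E} {e : E} {u w : V} (h : G.links e u w) :
    G.links e w u := by
  unfold Multigraph.links at *; tauto

lemma deg_mono (G : Multigraph V E) {A B : Finset E} (h : A ⊆ B) (v : V) :
    G.deg A v ≤ G.deg B v :=
  Nat.add_le_add (Finset.card_le_card (Finset.filter_subset_filter _ h))
    (Finset.card_le_card (Finset.filter_subset_filter _ h))

lemma deg_union (G : Multigraph V E) {A B : Finset E} (h : Disjoint A B) (v : V) :
    G.deg (A ∪ B) v = G.deg A v + G.deg B v := by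
  unfold Multigraph.deg
  rw [Finset.filter_union, Finset.filter_union,
    Finset.card_union_of_disjoint (Finset.disjoint_filter_filter h),
    Finset.card_union_of_disjoint (Finset.disjoint_filter_filter h)]
  ring

lemma deg_split (G : Multigraph V E) (A B : Finset E) (v : V) :
    G.deg A v = G.deg (A ∩ B) v + G.deg (A \ B) v := by
  conv_lhs => rw [← Finset.sdiff_union_inter A B]
  rw [deg_union G (Finset.disjoint_left.mpr
    (fun e he1 he2 => (Finset.mem_sdiff.mp he1).2 (Finset.mem_inter.mp he2).2)) v]
  ring

lemma sum_deg [Fintype V] (G : Multigraph V E) (M : Finset E) :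
    ∑ v : V, G.deg M v = 2 * M.card := by
  unfold Multigraph.deg
  rw [Finset.sum_add_distrib,
    ← Finset.card_eq_sum_card_fiberwise (f := G.fst) (t := Finset.univ)
      (fun e _ => Finset.mem_univ _),
    ← Finset.card_eq_sum_card_fiberwise (f := G.snd) (t := Finset.univ)
      (fun e _ => Finset.mem_univ _)]
  ring

lemma mem_edgeSet {W : MWalk V E} {e : E} : e ∈ W.edgeSet ↔ ∃ i < W.len, W.es i = e := by
  simp [MWalk.edgeSet, Finset.mem_image, Finset.mem_range]

lemma card_edgeSet {W : MWalk V E}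
    (hinj : ∀ i < W.len, ∀ j < W.len, W.es i = W.es j → i = j) :
    W.edgeSet.card = W.len := by
  rw [MWalk.edgeSet, Finset.card_image_of_injOn, Finset.card_range]
  intro i hi j hj hij
  rw [Finset.mem_coe, Finset.mem_range] at hi hj
  exact hinj i hi j hj hij

lemma edge_filter_eq (W : MWalk V E) (p : E → Prop) [DecidablePred p] :
    W.edgeSet.filter p = ((Finset.range W.len).filter (fun i => p (W.es i))).image W.es := by
  ext e
  simp only [MWalk.edgeSet, Finset.mem_filter, Finset.mem_image, Finset.mem_range]
  constructor
  · rintro ⟨⟨i, hi, rfl⟩, hp⟩; exact ⟨i, ⟨hi, hp⟩, rfl⟩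
  · rintro ⟨i, ⟨hi, hp⟩, rfl⟩; exact ⟨⟨i, hi, rfl⟩, hp⟩

lemma card_edge_filter (W : MWalk V E)
    (hinj : ∀ i < W.len, ∀ j < W.len, W.es i = W.es j → i = j)
    (p : E → Prop) [DecidablePred p] :
    (W.edgeSet.filter p).card = ((Finset.range W.len).filter (fun i => p (W.es i))).card := by
  rw [edge_filter_eq W p]
  apply Finset.card_image_of_injOn
  intro i hi j hj hij
  rw [Finset.mem_coe, Finset.mem_filter, Finset.mem_range] at hi hj
  exact hinj i hi.1 j hj.1 hij

lemma deg_edge_filter (G : Multigraph V E) (W : MWalk V E) (hw : W.IsWalk G)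
    (hinj : ∀ i < W.len, ∀ j < W.len, W.es i = W.es j → i = j)
    (p : E → Prop) [DecidablePred p] (v : V) :
    G.deg (W.edgeSet.filter p) v
      = ∑ i ∈ Finset.range W.len, (if p (W.es i) then
          ((if W.vs i = v then 1 else 0) + (if W.vs (i+1) = v then 1 else 0)) else 0) := by
  unfold Multigraph.deg
  rw [Finset.filter_filter, Finset.filter_filter,
    card_edge_filter W hinj _, card_edge_filter W hinj _,
    Finset.card_filter, Finset.card_filter, ← Finset.sum_add_distrib]
  apply Finset.sum_congr rfl
  intro i hi
  rw [Finset.mem_range] at hi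
  rcases hw i hi with ⟨h1, h2⟩ | ⟨h1, h2⟩
  · by_cases hp : p (W.es i) <;> simp [hp, h1, h2]
  · by_cases hp : p (W.es i) <;> simp [hp, h1, h2, add_comm]

lemma key_identity (G : Multigraph V E) (W : MWalk V E) (hw : W.IsWalk G)
    (hinj : ∀ i < W.len, ∀ j < W.len, W.es i = W.es j → i = j)
    (N : Finset E) (hpat : ∀ i < W.len, (W.es i ∈ N ↔ i % 2 = 1)) (v : V) :
    (G.deg (W.edgeSet.filter (· ∉ N)) v : ℤ) - (G.deg (W.edgeSet.filter (· ∈ N)) v : ℤ)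
      = (if W.vs 0 = v then 1 else 0)
        - (-1 : ℤ)^W.len * (if W.vs W.len = v then 1 else 0) := by
  rw [deg_edge_filter G W hw hinj _ v, deg_edge_filter G W hw hinj _ v]
  push_cast
  rw [← Finset.sum_sub_distrib]
  have hcongr : ∀ i ∈ Finset.range W.len,
      ((if W.es i ∉ N then ((if W.vs i = v then (1:ℤ) else 0)
          + (if W.vs (i+1) = v then (1:ℤ) else 0)) else 0)
       - (if W.es i ∈ N then ((if W.vs i = v then (1:ℤ) else 0)
          + (if W.vs (i+1) = v then (1:ℤ) else 0)) else 0))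
      = (fun j => (-1:ℤ)^j * (if W.vs j = v then (1:ℤ) else 0)) i
        - (fun j => (-1:ℤ)^j * (if W.vs j = v then (1:ℤ) else 0)) (i+1) := by
    intro i hi
    rw [Finset.mem_range] at hi
    simp only
    rcases Nat.even_or_odd i with he | ho
    · have h1 : i % 2 = 0 := Nat.even_iff.mp he
      have h2 : W.es i ∉ N := fun h => by have := (hpat i hi).mp h; omega
      have e1 : (-1:ℤ)^i = 1 := he.neg_one_pow
      have e2 : (-1:ℤ)^(i+1) = -1 := (he.add_one).neg_one_pow
      rw [if_pos h2, if_neg h2, e1, e2]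
      ring
    · have h1 : i % 2 = 1 := Nat.odd_iff.mp ho
      have h2 : W.es i ∈ N := (hpat i hi).mpr h1
      have e1 : (-1:ℤ)^i = -1 := ho.neg_one_pow
      have e2 : (-1:ℤ)^(i+1) = 1 := (ho.add_one).neg_one_pow
      rw [if_neg (fun h => h h2), if_pos h2, e1, e2]
      ring
  rw [Finset.sum_congr rfl hcongr, Finset.sum_range_sub']
  simp

end Stmt2Aux

namespace Stmt2Aux

open Finset

variable {V E : Type} [DecidableEq V] [DecidableEq E]

lemma card_odd_filter (n : ℕ) :
    ((Finset.range n).filter (fun i => i % 2 = 1)).card = n / 2 := by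
  induction n with
  | zero => simp
  | succ n ih =>
    rw [Finset.range_add_one, Finset.filter_insert]
    by_cases h : n % 2 = 1
    · rw [if_pos h, Finset.card_insert_of_notMem (by simp)]
      omega
    · rw [if_neg h]; omega

lemma card_filter_partition (n : ℕ) (p : ℕ → Prop) [DecidablePred p] :
    ((Finset.range n).filter p).card + ((Finset.range n).filter (fun i => ¬ p i)).card = n := by
  rw [Finset.card_filter_add_card_filter_not, Finset.card_range]

/-- Pattern: even positions carry `Ms \ N` edges, odd positions `N \ Ms` edges. -/
def Pat (N Ms : Finset E) (W : MWalk V E) : Prop :=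
  ∀ i < W.len, (i % 2 = 0 → W.es i ∈ Ms \ N) ∧ (i % 2 = 1 → W.es i ∈ N \ Ms)

lemma Pat.memN {N Ms : Finset E} {W : MWalk V E} (h : Pat N Ms W) :
    ∀ i < W.len, (W.es i ∈ N ↔ i % 2 = 1) := by
  intro i hi
  rcases Nat.mod_two_eq_zero_or_one i with h0 | h1
  · exact iff_of_false (Finset.mem_sdiff.mp ((h i hi).1 h0)).2 (by omega)
  · exact iff_of_true (Finset.mem_sdiff.mp ((h i hi).2 h1)).1 h1

lemma Pat.iffMs {N Ms : Finset E} {W : MWalk V E} (h : Pat N Ms W) :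
    ∀ e ∈ W.edgeSet, (e ∈ N ↔ e ∉ Ms) := by
  intro e he
  obtain ⟨i, hi, rfl⟩ := mem_edgeSet.mp he
  rcases Nat.mod_two_eq_zero_or_one i with h0 | h1
  · have h2 := Finset.mem_sdiff.mp ((h i hi).1 h0)
    exact iff_of_false h2.2 (fun h3 => h3 h2.1)
  · have h2 := Finset.mem_sdiff.mp ((h i hi).2 h1)
    exact iff_of_true h2.1 h2.2

lemma Pat.memSd {N Ms : Finset E} {W : MWalk V E} (h : Pat N Ms W) :
    ∀ e ∈ W.edgeSet, e ∈ sd N Ms := by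
  intro e he
  obtain ⟨i, hi, rfl⟩ := mem_edgeSet.mp he
  rcases Nat.mod_two_eq_zero_or_one i with h0 | h1
  · have h2 := Finset.mem_sdiff.mp ((h i hi).1 h0)
    exact mem_sd.mpr (Or.inr ⟨h2.1, h2.2⟩)
  · have h2 := Finset.mem_sdiff.mp ((h i hi).2 h1)
    exact mem_sd.mpr (Or.inl ⟨h2.1, h2.2⟩)

lemma alt_of_memN {W : MWalk V E} {M : Finset E}
    (h : ∀ i < W.len, (W.es i ∈ M ↔ i % 2 = 1)) : W.Alternating M := by
  intro i hi
  rw [h i (by omega), h (i+1) hi]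
  omega

def Cand (G : Multigraph V E) (N Ms : Finset E) (v0 : V) (W : MWalk V E) : Prop :=
  W.IsTrail G ∧ 1 ≤ W.len ∧ W.vs 0 = v0 ∧ Pat N Ms W

lemma cand_len_le {G : Multigraph V E} {N Ms : Finset E} {v0 : V} {W : MWalk V E}
    (h : Cand G N Ms v0 W) : W.len ≤ (sd N Ms).card := by
  rw [← card_edgeSet h.1.2]
  exact Finset.card_le_card (fun e he => h.2.2.2.memSd e he)

def extendW (W : MWalk V E) (e : E) (w : V) : MWalk V E :=
  ⟨W.len + 1, Function.update W.vs (W.len + 1) w, Function.update W.es W.len e⟩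

lemma extend_cand {G : Multigraph V E} {N Ms : Finset E} {v0 : V} {W : MWalk V E}
    (hc : Cand G N Ms v0 W) {e : E} {w : V}
    (hmem : (W.len % 2 = 0 → e ∈ Ms \ N) ∧ (W.len % 2 = 1 → e ∈ N \ Ms))
    (hnew : e ∉ W.edgeSet) (hlink : G.links e (W.vs W.len) w) :
    Cand G N Ms v0 (extendW W e w) := by
  obtain ⟨⟨hwalk, hinj⟩, hlen, hv0, hpat⟩ := hc
  have hes : ∀ i, i ≠ W.len → (extendW W e w).es i = W.es i := fun i hi =>
    Function.update_of_ne hi _ _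
  have hesl : (extendW W e w).es W.len = e := Function.update_self _ _ _
  have hvs : ∀ i, i ≠ W.len + 1 → (extendW W e w).vs i = W.vs i := fun i hi =>
    Function.update_of_ne hi _ _
  have hvsl : (extendW W e w).vs (W.len + 1) = w := Function.update_self _ _ _
  have hL : (extendW W e w).len = W.len + 1 := rfl
  refine ⟨⟨?_, ?_⟩, by rw [hL]; omega, ?_, ?_⟩
  · intro i hi
    rw [hL] at hi
    rcases Nat.lt_or_ge i W.len with h | h
    · rw [hes i (by omega), hvs i (by omega), hvs (i+1) (by omega)]
      exact hwalk i h
    · have hi' : i = W.len := by omega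
      subst hi'
      rw [hesl, hvs W.len (by omega), hvsl]
      exact hlink
  · intro i hi j hj he2
    rw [hL] at hi hj
    rcases Nat.lt_or_ge i W.len with h1 | h1 <;> rcases Nat.lt_or_ge j W.len with h2 | h2
    · exact hinj i h1 j h2 (by rwa [hes i (by omega), hes j (by omega)] at he2)
    · exfalso
      have hj' : j = W.len := by omega
      subst hj'
      rw [hes i (by omega), hesl] at he2
      exact hnew (mem_edgeSet.mpr ⟨i, h1, he2⟩)
    · exfalso
      have hi' : i = W.len := by omega
      subst hi'
      rw [hesl, hes j (by omega)] at he2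
      exact hnew (mem_edgeSet.mpr ⟨j, h2, he2.symm⟩)
    · omega
  · rw [hvs 0 (by omega)]; exact hv0
  · intro i hi
    rw [hL] at hi
    rcases Nat.lt_or_ge i W.len with h | h
    · rw [hes i (by omega)]
      exact hpat i h
    · have hi' : i = W.len := by omega
      subst hi'
      rw [hesl]
      exact hmem

lemma exists_max_cand {G : Multigraph V E} {N Ms : Finset E} {v0 : V} {W0 : MWalk V E}
    (h0 : Cand G N Ms v0 W0) :
    ∃ W, Cand G N Ms v0 W ∧ ∀ W', Cand G N Ms v0 W' → W'.len ≤ W.len := by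
  classical
  set P : ℕ → Prop := fun n => ∃ W, Cand G N Ms v0 W ∧ W.len = n with hP
  have h1 : P W0.len := ⟨W0, h0, rfl⟩
  obtain ⟨W, hW, hWlen⟩ := Nat.findGreatest_spec (cand_len_le h0) h1
  refine ⟨W, hW, ?_⟩
  intro W' hW'
  rw [hWlen]
  exact Nat.le_findGreatest (cand_len_le hW') ⟨W', hW', rfl⟩

/-- counts of matched / unmatched edges on a trail -/
lemma count_edges {W : MWalk V E}
    (hinj : ∀ i < W.len, ∀ j < W.len, W.es i = W.es j → i = j)
    {N : Finset E} (hmemN : ∀ i < W.len, (W.es i ∈ N ↔ i % 2 = 1)) :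
    (W.edgeSet.filter (· ∈ N)).card = W.len / 2 ∧
    (W.edgeSet.filter (· ∉ N)).card = W.len - W.len / 2 := by
  have h1 : (W.edgeSet.filter (· ∈ N)).card = W.len / 2 := by
    rw [card_edge_filter W hinj _]
    have heq : (Finset.range W.len).filter (fun i => W.es i ∈ N)
        = (Finset.range W.len).filter (fun i => i % 2 = 1) :=
      Finset.filter_congr (fun i hi => by
        rw [Finset.mem_range] at hi
        simpa using hmemN i hi)
    rw [heq]
    exact card_odd_filter W.len
  refine ⟨h1, ?_⟩
  have h2 := card_filter_partition W.len (fun i => W.es i ∈ N)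
  rw [card_edge_filter W hinj (· ∈ N), card_edge_filter W hinj (· ∉ N)] at *
  omega

/-- Flip of `N` along the edges of `W`. -/
def flip (N : Finset E) (W : MWalk V E) : Finset E := (N \ W.edgeSet) ∪ (W.edgeSet \ N)

lemma mem_flip {N : Finset E} {W : MWalk V E} {e : E} :
    e ∈ flip N W ↔ ((e ∈ N ∧ e ∉ W.edgeSet) ∨ (e ∈ W.edgeSet ∧ e ∉ N)) := by
  simp [flip, Finset.mem_union, Finset.mem_sdiff]

lemma flip_deg (G : Multigraph V E) {W : MWalk V E} (hw : W.IsWalk G)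
    (hinj : ∀ i < W.len, ∀ j < W.len, W.es i = W.es j → i = j)
    {N : Finset E} (hmemN : ∀ i < W.len, (W.es i ∈ N ↔ i % 2 = 1)) (v : V) :
    (G.deg (flip N W) v : ℤ) = G.deg N v + (if W.vs 0 = v then 1 else 0)
      - (-1 : ℤ)^W.len * (if W.vs W.len = v then 1 else 0) := by
  have hd1 : G.deg (flip N W) v = G.deg (N \ W.edgeSet) v + G.deg (W.edgeSet \ N) v :=
    deg_union G (Finset.disjoint_left.mpr
      (fun e he1 he2 => (Finset.mem_sdiff.mp he2).2 (Finset.mem_sdiff.mp he1).1)) v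
  have hd2 : G.deg N v = G.deg (N ∩ W.edgeSet) v + G.deg (N \ W.edgeSet) v :=
    deg_split G N W.edgeSet v
  have he1 : W.edgeSet \ N = W.edgeSet.filter (· ∉ N) := by
    ext e; simp [Finset.mem_sdiff, Finset.mem_filter]
  have he2 : N ∩ W.edgeSet = W.edgeSet.filter (· ∈ N) := by
    ext e; simp [Finset.mem_inter, Finset.mem_filter]; tauto
  have hk := key_identity G W hw hinj N hmemN v
  rw [he1] at hd1
  rw [he2] at hd2
  push_cast [hd1, hd2]
  linarith

lemma flip_card {W : MWalk V E}
    (hinj : ∀ i < W.len, ∀ j < W.len, W.es i = W.es j → i = j)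
    {N : Finset E} (hmemN : ∀ i < W.len, (W.es i ∈ N ↔ i % 2 = 1)) :
    (flip N W).card + W.len / 2 = N.card + (W.len - W.len / 2) := by
  have hd1 : (flip N W).card = (N \ W.edgeSet).card + (W.edgeSet \ N).card :=
    Finset.card_union_of_disjoint (Finset.disjoint_left.mpr
      (fun e he1 he2 => (Finset.mem_sdiff.mp he2).2 (Finset.mem_sdiff.mp he1).1))
  have hd2 : (N ∩ W.edgeSet).card + (N \ W.edgeSet).card = N.card :=
    Finset.card_inter_add_card_sdiff N W.edgeSet
  have he1 : W.edgeSet \ N = W.edgeSet.filter (· ∉ N) := by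
    ext e; simp [Finset.mem_sdiff, Finset.mem_filter]
  have he2 : N ∩ W.edgeSet = W.edgeSet.filter (· ∈ N) := by
    ext e; simp [Finset.mem_inter, Finset.mem_filter]; tauto
  obtain ⟨hc1, hc2⟩ := count_edges hinj hmemN
  rw [hd1, he1, hc2, ← hd2, he2, hc1]
  omega

lemma flip_sd {W : MWalk V E} {N Ms : Finset E} (hpat : Pat N Ms W) :
    sd (flip N W) Ms ⊆ (sd N Ms) \ W.edgeSet := by
  intro e he
  rw [mem_sd] at he
  rw [Finset.mem_sdiff, mem_sd]
  rcases he with ⟨h1, h2⟩ | ⟨h1, h2⟩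
  · rcases mem_flip.mp h1 with ⟨h3, h4⟩ | ⟨h3, h4⟩
    · exact ⟨Or.inl ⟨h3, h2⟩, h4⟩
    · exact absurd ((hpat.iffMs e h3).mpr h2) h4
  · by_cases h3 : e ∈ W.edgeSet
    · have h4 : e ∉ N := fun h5 => ((hpat.iffMs e h3).mp h5) h1
      exact absurd (mem_flip.mpr (Or.inr ⟨h3, h4⟩)) h2
    · have h4 : e ∉ N := fun h5 => h2 (mem_flip.mpr (Or.inl ⟨h5, h3⟩))
      exact ⟨Or.inr ⟨h1, h4⟩, h3⟩

end Stmt2Aux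

namespace Stmt2Aux

open Finset

variable {V E : Type} [DecidableEq V] [DecidableEq E]

lemma existsAug [Fintype V] (G : Multigraph V E) (f : V → ℕ) (Mstar : Finset E)
    (hMstar : G.IsFMatching f Mstar) :
    ∀ n (M : Finset E), G.IsFMatching f M → M.card < Mstar.card →
      (sd M Mstar).card ≤ n →
      ∃ W, IsAugTrail G f M W ∧ Pat M Mstar W := by
  intro n
  induction n with
  | zero =>
    intro M hM hlt hcard
    exfalso
    have h1 : sd M Mstar = ∅ := Finset.card_eq_zero.mp (Nat.le_zero.mp hcard)
    have h2 : M = Mstar := by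
      apply Finset.Subset.antisymm
      · intro e he
        by_contra h3
        have h4 : e ∈ sd M Mstar := mem_sd.mpr (Or.inl ⟨he, h3⟩)
        simp [h1] at h4
      · intro e he
        by_contra h3
        have h4 : e ∈ sd M Mstar := mem_sd.mpr (Or.inr ⟨he, h3⟩)
        simp [h1] at h4
    rw [h2] at hlt
    exact lt_irrefl _ hlt
  | succ n ih =>
    intro M hM hlt hcard
    have hsum : ∑ v : V, G.deg M v < ∑ v : V, G.deg Mstar v := by
      rw [sum_deg, sum_deg]; omega
    obtain ⟨v0, -, hv0⟩ := Finset.exists_lt_of_sum_lt hsum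
    have hv0f : G.deg M v0 < f v0 := lt_of_lt_of_le hv0 (hMstar v0)
    have hdd : G.deg (M \ Mstar) v0 < G.deg (Mstar \ M) v0 := by
      have h1 := deg_split G M Mstar v0
      have h2 := deg_split G Mstar M v0
      rw [Finset.inter_comm] at h2
      omega
    obtain ⟨e0, he0, he0v⟩ : ∃ e ∈ Mstar \ M, G.fst e = v0 ∨ G.snd e = v0 := by
      have hpos : 0 < G.deg (Mstar \ M) v0 := by omega
      unfold Multigraph.deg at hpos
      rcases (by omega : 0 < ((Mstar \ M).filter (fun e => G.fst e = v0)).card ∨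
          0 < ((Mstar \ M).filter (fun e => G.snd e = v0)).card) with h | h
      · obtain ⟨e, he⟩ := Finset.card_pos.mp h
        rw [Finset.mem_filter] at he
        exact ⟨e, he.1, Or.inl he.2⟩
      · obtain ⟨e, he⟩ := Finset.card_pos.mp h
        rw [Finset.mem_filter] at he
        exact ⟨e, he.1, Or.inr he.2⟩
    set w0 := if G.fst e0 = v0 then G.snd e0 else G.fst e0 with hw0
    have hlink0 : G.links e0 v0 w0 := by
      by_cases h2 : G.fst e0 = v0
      · rw [hw0, if_pos h2]; exact Or.inl ⟨h2, rfl⟩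
      · rcases he0v with h | h
        · exact absurd h h2
        · rw [hw0, if_neg h2]; exact Or.inr ⟨rfl, h⟩
    have hcand0 : Cand G M Mstar v0 ⟨1, fun i => if i = 0 then v0 else w0, fun _ => e0⟩ := by
      refine ⟨⟨?_, ?_⟩, le_refl 1, rfl, ?_⟩
      · intro i hi
        have hi' : i < 1 := hi
        have h3 : i = 0 := by omega
        subst h3
        simpa using hlink0
      · intro i hi j hj _
        have hi' : i < 1 := hi
        have hj' : j < 1 := hj
        omega
      · intro i hi
        have hi' : i < 1 := hi
        have h3 : i = 0 := by omega
        subst h3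
        exact ⟨fun _ => he0, fun h => absurd h (by omega)⟩
    obtain ⟨W, hWc, hmax⟩ := exists_max_cand hcand0
    obtain ⟨⟨hwalk, hinj⟩, hlen1, hvs0, hpat⟩ := hWc
    have hmemN := Pat.memN hpat
    have hstuck : ∀ e w, ((W.len % 2 = 0 → e ∈ Mstar \ M) ∧ (W.len % 2 = 1 → e ∈ M \ Mstar)) →
        e ∉ W.edgeSet → ¬ G.links e (W.vs W.len) w := by
      intro e w hmem hnew hlink
      have h2 := hmax _ (extend_cand ⟨⟨hwalk, hinj⟩, hlen1, hvs0, hpat⟩ hmem hnew hlink)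
      have h3 : W.len + 1 ≤ W.len := h2
      omega
    rcases Nat.mod_two_eq_zero_or_one W.len with heven | hodd
    · -- even length: flip along W and recurse
      have hlen2 : 2 ≤ W.len := by omega
      have hiffMs := Pat.iffMs hpat
      have hdeg' : ∀ v, (G.deg (flip M W) v : ℤ)
          = G.deg M v + (if W.vs 0 = v then 1 else 0) - (if W.vs W.len = v then 1 else 0) := by
        intro v
        have h1 := flip_deg G hwalk hinj hmemN v
        rw [(Nat.even_iff.mpr heven).neg_one_pow] at h1
        linarith [h1]
      have hM'match : G.IsFMatching f (flip M W) := by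
        intro v
        have h1 := hdeg' v
        have hite : (0:ℤ) ≤ (if W.vs W.len = v then (1:ℤ) else 0) := by split <;> norm_num
        by_cases h2 : W.vs 0 = v
        · have hvv : v0 = v := by rw [← hvs0, h2]
          have h3 : (G.deg M v : ℤ) + 1 ≤ f v := by
            have h5 := hv0f; rw [hvv] at h5; exact_mod_cast h5
          have h4 : (G.deg (flip M W) v : ℤ) ≤ f v := by rw [h1, if_pos h2]; linarith
          exact_mod_cast h4
        · have h3 : (G.deg M v : ℤ) ≤ f v := by exact_mod_cast hM v
          have h4 : (G.deg (flip M W) v : ℤ) ≤ f v := by rw [h1, if_neg h2]; linarith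
          exact_mod_cast h4
      have hcard' : (flip M W).card = M.card := by
        have h1 := flip_card hinj hmemN
        have h2 : W.len % 2 = 0 := heven
        omega
      have hsub : W.edgeSet ⊆ sd M Mstar := fun e he => hpat.memSd e he
      have hsdcard : (sd (flip M W) Mstar).card ≤ n := by
        have h1 := Finset.card_le_card (flip_sd hpat)
        rw [Finset.card_sdiff_of_subset hsub, card_edgeSet hinj] at h1
        omega
      obtain ⟨W', haug', hpat'⟩ := ih (flip M W) hM'match (by rw [hcard']; exact hlt) hsdcard
      obtain ⟨⟨hwalk', hinj'⟩, hlen1', hodd', halt', he0', heL', hd0', hdL', hcl'⟩ := haug'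
      have hMM' : ∀ e, e ∉ W.edgeSet → (e ∈ flip M W ↔ e ∈ M) := by
        intro e he; rw [mem_flip]; tauto
      have hdisj : ∀ i < W'.len, W'.es i ∉ W.edgeSet := by
        intro i hi hmemT
        rcases Nat.mod_two_eq_zero_or_one i with h0 | h1
        · have h2 := Finset.mem_sdiff.mp ((hpat' i hi).1 h0)
          have h3 : W'.es i ∈ M := by
            by_contra h4
            exact h2.2 (mem_flip.mpr (Or.inr ⟨hmemT, h4⟩))
          exact (hiffMs _ hmemT).mp h3 h2.1
        · have h2 := Finset.mem_sdiff.mp ((hpat' i hi).2 h1)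
          rcases mem_flip.mp h2.1 with ⟨h3, h4⟩ | ⟨h3, h4⟩
          · exact h4 hmemT
          · exact h4 ((hiffMs _ h3).mpr h2.2)
      have hpatM : Pat M Mstar W' := by
        intro i hi
        refine ⟨fun h0 => ?_, fun h1 => ?_⟩
        · have h2 := Finset.mem_sdiff.mp ((hpat' i hi).1 h0)
          exact Finset.mem_sdiff.mpr ⟨h2.1, fun h3 => h2.2 ((hMM' _ (hdisj i hi)).mpr h3)⟩
        · have h2 := Finset.mem_sdiff.mp ((hpat' i hi).2 h1)
          exact Finset.mem_sdiff.mpr ⟨(hMM' _ (hdisj i hi)).mp h2.1, h2.2⟩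
      have hne0 : W'.vs 0 ≠ W.vs W.len := by
        intro hEq
        have h0 : 0 < W'.len := hlen1'
        have h2 := (hpatM 0 h0).1 rfl
        refine hstuck (W'.es 0) (W'.vs 1) ⟨fun _ => h2, fun h => absurd h (by omega)⟩
          (hdisj 0 h0) ?_
        have h3 := hwalk' 0 h0
        rwa [hEq] at h3
      have hneL : W'.vs W'.len ≠ W.vs W.len := by
        intro hEq
        have h0 : W'.len - 1 < W'.len := by omega
        have hp : (W'.len - 1) % 2 = 0 := by omega
        have h2 := (hpatM _ h0).1 hp
        have h3 := hwalk' (W'.len - 1) h0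
        have h4 : W'.len - 1 + 1 = W'.len := by omega
        rw [h4] at h3
        refine hstuck (W'.es (W'.len - 1)) (W'.vs (W'.len - 1))
          ⟨fun _ => h2, fun h => absurd h (by omega)⟩ (hdisj _ h0) ?_
        have h5 := links_symm h3
        rwa [hEq] at h5
      have hdegM : ∀ v, v ≠ W.vs W.len → G.deg M v ≤ G.deg (flip M W) v := by
        intro v hv
        have h1 := hdeg' v
        have h2 : (if W.vs W.len = v then (1:ℤ) else 0) = 0 := if_neg (fun h => hv h.symm)
        have h3 : (0:ℤ) ≤ (if W.vs 0 = v then (1:ℤ) else 0) := by split <;> norm_num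
        have h4 : (G.deg M v : ℤ) ≤ G.deg (flip M W) v := by rw [h1, h2]; linarith
        exact_mod_cast h4
      refine ⟨W', ⟨⟨hwalk', hinj'⟩, hlen1', hodd', alt_of_memN (Pat.memN hpatM), ?_, ?_, ?_, ?_,
        ?_⟩, hpatM⟩
      · exact (Finset.mem_sdiff.mp ((hpatM 0 hlen1').1 rfl)).2
      · have h0 : W'.len - 1 < W'.len := by omega
        exact (Finset.mem_sdiff.mp ((hpatM _ h0).1 (by omega))).2
      · exact lt_of_le_of_lt (hdegM _ hne0) hd0'
      · exact lt_of_le_of_lt (hdegM _ hneL) hdL'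
      · intro h
        have h1 := hdegM _ hne0
        have h2 := hcl' h
        omega
    · -- odd length: W itself is augmenting
      have hsub1 : ∀ e ∈ M \ Mstar, (G.fst e = W.vs W.len ∨ G.snd e = W.vs W.len) →
          e ∈ W.edgeSet := by
        intro e he hor
        by_contra hne
        have hmm : (W.len % 2 = 0 → e ∈ Mstar \ M) ∧ (W.len % 2 = 1 → e ∈ M \ Mstar) :=
          ⟨fun h => absurd h (by omega), fun _ => he⟩
        rcases hor with h | h
        · exact hstuck e (G.snd e) hmm hne (Or.inl ⟨h, rfl⟩)
        · exact hstuck e (G.fst e) hmm hne (Or.inr ⟨rfl, h⟩)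
      have hallM : G.deg (M \ Mstar) (W.vs W.len)
          ≤ G.deg (W.edgeSet.filter (· ∈ M)) (W.vs W.len) := by
        unfold Multigraph.deg
        apply Nat.add_le_add
        · apply Finset.card_le_card
          intro e he
          rw [Finset.mem_filter] at he
          rw [Finset.mem_filter, Finset.mem_filter]
          exact ⟨⟨hsub1 e he.1 (Or.inl he.2), (Finset.mem_sdiff.mp he.1).1⟩, he.2⟩
        · apply Finset.card_le_card
          intro e he
          rw [Finset.mem_filter] at he
          rw [Finset.mem_filter, Finset.mem_filter]
          exact ⟨⟨hsub1 e he.1 (Or.inr he.2), (Finset.mem_sdiff.mp he.1).1⟩, he.2⟩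
      have hbound : G.deg (W.edgeSet.filter (· ∉ M)) (W.vs W.len)
          ≤ G.deg (Mstar \ M) (W.vs W.len) := by
        apply deg_mono
        intro e he
        rw [Finset.mem_filter] at he
        obtain ⟨i, hi, rfl⟩ := mem_edgeSet.mp he.1
        rcases Nat.mod_two_eq_zero_or_one i with h0 | h1
        · exact (hpat i hi).1 h0
        · exact absurd (Finset.mem_sdiff.mp ((hpat i hi).2 h1)).1 he.2
      have hkey := key_identity G W hwalk hinj M hmemN (W.vs W.len)
      rw [(Nat.odd_iff.mpr hodd).neg_one_pow, if_pos rfl] at hkey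
      have hsplit1 := deg_split G M Mstar (W.vs W.len)
      have hsplit2 := deg_split G Mstar M (W.vs W.len)
      rw [Finset.inter_comm] at hsplit2
      have hfu : G.deg Mstar (W.vs W.len) ≤ f (W.vs W.len) := hMstar _
      have hfin : (G.deg M (W.vs W.len) : ℤ) + 1 + (if W.vs 0 = W.vs W.len then 1 else 0)
          ≤ f (W.vs W.len) := by
        have c1 : (G.deg (M \ Mstar) (W.vs W.len) : ℤ)
            ≤ G.deg (W.edgeSet.filter (· ∈ M)) (W.vs W.len) := by exact_mod_cast hallM
        have c2 : (G.deg (W.edgeSet.filter (· ∉ M)) (W.vs W.len) : ℤ)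
            ≤ G.deg (Mstar \ M) (W.vs W.len) := by exact_mod_cast hbound
        have c3 : (G.deg M (W.vs W.len) : ℤ)
            = G.deg (M ∩ Mstar) (W.vs W.len) + G.deg (M \ Mstar) (W.vs W.len) := by
          exact_mod_cast hsplit1
        have c4 : (G.deg Mstar (W.vs W.len) : ℤ)
            = G.deg (M ∩ Mstar) (W.vs W.len) + G.deg (Mstar \ M) (W.vs W.len) := by
          exact_mod_cast hsplit2
        have c5 : (G.deg Mstar (W.vs W.len) : ℤ) ≤ f (W.vs W.len) := by exact_mod_cast hfu
        linarith [hkey]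
      have hdegu : G.deg M (W.vs W.len) < f (W.vs W.len) := by
        have hite : (0:ℤ) ≤ (if W.vs 0 = W.vs W.len then (1:ℤ) else 0) := by split <;> norm_num
        have h2 : (G.deg M (W.vs W.len) : ℤ) + 1 ≤ f (W.vs W.len) := by linarith
        exact_mod_cast h2
      have hdeg0 : G.deg M (W.vs 0) < f (W.vs 0) := by rw [hvs0]; exact hv0f
      have hclosed : W.vs 0 = W.vs W.len → G.deg M (W.vs 0) + 2 ≤ f (W.vs 0) := by
        intro h
        rw [h]
        rw [if_pos h] at hfin
        have h2 : (G.deg M (W.vs W.len) : ℤ) + 2 ≤ f (W.vs W.len) := by linarith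
        exact_mod_cast h2
      refine ⟨W, ⟨⟨hwalk, hinj⟩, hlen1, hodd, alt_of_memN hmemN, ?_, ?_, hdeg0, hdegu, hclosed⟩,
        hpat⟩
      · exact (Finset.mem_sdiff.mp ((hpat 0 hlen1).1 rfl)).2
      · have h0 : W.len - 1 < W.len := by omega
        exact (Finset.mem_sdiff.mp ((hpat _ h0).1 (by omega))).2

end Stmt2Aux

namespace Stmt2Aux

open Finset

variable {V E : Type} [DecidableEq V] [DecidableEq E]

lemma main_count [Fintype V] (G : Multigraph V E) (f : V → ℕ) (M Mstar : Finset E) (s : ℕ)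
    (hlong : ∀ W : MWalk V E, IsAugTrail G f M W → s ≤ W.len)
    (hMstar : G.IsFMatching f Mstar) :
    ∀ k (N C : Finset E), G.IsFMatching f N →
      (∀ e ∈ sd N Mstar, (e ∈ N ↔ e ∈ M)) →
      (∀ v, G.deg M v ≤ G.deg N v) →
      C ⊆ M → (∀ e ∈ C, e ∉ sd N Mstar) →
      N.card + k ≤ Mstar.card →
      ∃ C' : Finset E, C' ⊆ M ∧ 2 * C.card + k * (s - 1) ≤ 2 * C'.card := by
  intro k
  induction k with
  | zero =>
    intro N C _ _ _ hCM _ _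
    exact ⟨C, hCM, by omega⟩
  | succ k ih =>
    intro N C hN hNb hNc hCM hCd hk
    have hlt : N.card < Mstar.card := by omega
    obtain ⟨T, hTaug, hTpat⟩ := existsAug G f Mstar hMstar (sd N Mstar).card N hN hlt le_rfl
    obtain ⟨⟨hwalk, hinj⟩, hlen1, hodd, halt, he0T, heLT, hd0, hdL, hcl⟩ := hTaug
    have hmemN := Pat.memN hTpat
    have hTsd : ∀ e ∈ T.edgeSet, e ∈ sd N Mstar := hTpat.memSd
    have hmemM : ∀ i < T.len, (T.es i ∈ M ↔ i % 2 = 1) := by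
      intro i hi
      rw [← hNb _ (hTsd _ (mem_edgeSet.mpr ⟨i, hi, rfl⟩))]
      exact hmemN i hi
    have hTaugM : IsAugTrail G f M T := by
      refine ⟨⟨hwalk, hinj⟩, hlen1, hodd, alt_of_memN hmemM, ?_, ?_,
        lt_of_le_of_lt (hNc _) hd0, lt_of_le_of_lt (hNc _) hdL, ?_⟩
      · intro h
        have h2 := (hmemM 0 hlen1).mp h
        omega
      · intro h
        have h0 : T.len - 1 < T.len := by omega
        have h2 := (hmemM _ h0).mp h
        omega
      · intro h
        have h1 := hNc (T.vs 0)
        have h2 := hcl h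
        omega
    have hsT := hlong T hTaugM
    have hdeg' : ∀ v, (G.deg (flip N T) v : ℤ)
        = G.deg N v + (if T.vs 0 = v then 1 else 0) + (if T.vs T.len = v then 1 else 0) := by
      intro v
      have h1 := flip_deg G hwalk hinj hmemN v
      rw [(Nat.odd_iff.mpr hodd).neg_one_pow] at h1
      linarith [h1]
    have hN'match : G.IsFMatching f (flip N T) := by
      intro v
      have h1 := hdeg' v
      by_cases h2 : T.vs 0 = v <;> by_cases h3 : T.vs T.len = v
      · have h4 : G.deg N v + 2 ≤ f v := by rw [← h2]; exact hcl (h2.trans h3.symm)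
        have h5 : (G.deg N v : ℤ) + 2 ≤ f v := by exact_mod_cast h4
        have h6 : (G.deg (flip N T) v : ℤ) ≤ f v := by rw [h1, if_pos h2, if_pos h3]; linarith
        exact_mod_cast h6
      · have h4 : G.deg N v < f v := by rw [← h2]; exact hd0
        have h5 : (G.deg N v : ℤ) + 1 ≤ f v := by exact_mod_cast h4
        have h6 : (G.deg (flip N T) v : ℤ) ≤ f v := by rw [h1, if_pos h2, if_neg h3]; linarith
        exact_mod_cast h6
      · have h4 : G.deg N v < f v := by rw [← h3]; exact hdL
        have h5 : (G.deg N v : ℤ) + 1 ≤ f v := by exact_mod_cast h4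
        have h6 : (G.deg (flip N T) v : ℤ) ≤ f v := by rw [h1, if_neg h2, if_pos h3]; linarith
        exact_mod_cast h6
      · have h5 : (G.deg N v : ℤ) ≤ f v := by exact_mod_cast hN v
        have h6 : (G.deg (flip N T) v : ℤ) ≤ f v := by rw [h1, if_neg h2, if_neg h3]; linarith
        exact_mod_cast h6
    have hcard' : (flip N T).card = N.card + 1 := by
      have h1 := flip_card hinj hmemN
      omega
    have hsd' : sd (flip N T) Mstar ⊆ sd N Mstar \ T.edgeSet := flip_sd hTpat
    have hNb' : ∀ e ∈ sd (flip N T) Mstar, (e ∈ flip N T ↔ e ∈ M) := by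
      intro e he
      have h2 := hsd' he
      rw [Finset.mem_sdiff] at h2
      have h3 := hNb e h2.1
      rw [mem_flip]
      tauto
    have hNc' : ∀ v, G.deg M v ≤ G.deg (flip N T) v := by
      intro v
      have h1 := hdeg' v
      have i1 : (0:ℤ) ≤ (if T.vs 0 = v then (1:ℤ) else 0) := by split <;> norm_num
      have i2 : (0:ℤ) ≤ (if T.vs T.len = v then (1:ℤ) else 0) := by split <;> norm_num
      have h2 : (G.deg N v : ℤ) ≤ G.deg (flip N T) v := by rw [h1]; linarith
      exact le_trans (hNc v) (by exact_mod_cast h2)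
    have hC2M : C ∪ T.edgeSet.filter (· ∈ N) ⊆ M := by
      intro e he
      rcases Finset.mem_union.mp he with h | h
      · exact hCM h
      · rw [Finset.mem_filter] at h
        exact (hNb e (hTsd _ h.1)).mp h.2
    have hC2d : ∀ e ∈ C ∪ T.edgeSet.filter (· ∈ N), e ∉ sd (flip N T) Mstar := by
      intro e he hmem
      have h2 := hsd' hmem
      rw [Finset.mem_sdiff] at h2
      rcases Finset.mem_union.mp he with h | h
      · exact hCd e h h2.1
      · rw [Finset.mem_filter] at h
        exact h2.2 h.1
    have hk' : (flip N T).card + k ≤ Mstar.card := by omega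
    obtain ⟨C', hC'M, hC'⟩ := ih (flip N T) (C ∪ T.edgeSet.filter (· ∈ N))
      hN'match hNb' hNc' hC2M hC2d hk'
    have hdisjC : Disjoint C (T.edgeSet.filter (· ∈ N)) := by
      rw [Finset.disjoint_left]
      intro e he hmem
      rw [Finset.mem_filter] at hmem
      exact hCd e he (hTsd _ hmem.1)
    have hC2card : (C ∪ T.edgeSet.filter (· ∈ N)).card = C.card + T.len / 2 := by
      rw [Finset.card_union_of_disjoint hdisjC, (count_edges hinj hmemN).1]
    refine ⟨C', hC'M, ?_⟩
    have hml : 2 * (T.len / 2) + 1 = T.len := by omega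
    have hexp : (k+1) * (s-1) = k * (s-1) + (s-1) := by ring
    omega

lemma final_nat [Fintype V] (G : Multigraph V E) (f : V → ℕ) (M Mstar : Finset E) (s : ℕ)
    (hM : G.IsFMatching f M) (hMstar : G.IsFMatching f Mstar)
    (hlong : ∀ W : MWalk V E, IsAugTrail G f M W → s ≤ W.len) :
    (Mstar.card - M.card) * (s - 1) ≤ ∑ v : V, f v := by
  rcases le_or_gt Mstar.card M.card with hcase | hcase
  · have h0 : Mstar.card - M.card = 0 := by omega
    rw [h0]
    simp
  obtain ⟨C', hC'M, hC'⟩ := main_count G f M Mstar s hlong hMstar (Mstar.card - M.card) M ∅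
    hM (fun e _ => Iff.rfl) (fun v => le_refl _) (Finset.empty_subset _)
    (fun e he => absurd he (Finset.notMem_empty e)) (by omega)
  have h1 : C'.card ≤ M.card := Finset.card_le_card hC'M
  have h2 : 2 * M.card ≤ ∑ v : V, f v := by
    rw [← sum_deg G M]
    exact Finset.sum_le_sum (fun v _ => hM v)
  simp only [Finset.card_empty] at hC'
  omega

end Stmt2Aux


/-- If every augmenting trail for M has length at least s, then for any
f-matching M*, |M*| − |M| ≤ 2·f(V)/(s−1) (i.e. at most f(V)/(s−1) augmenting
trails are needed), and if s ≥ √f(V) + 1 then |M*| − |M| ≤ 2√f(V). -/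
theorem stmt_2 [Fintype V] [DecidableEq V] [DecidableEq E]
    (G : Multigraph V E) (f : V → ℕ) (M Mstar : Finset E) (s : ℕ) (hs : 2 ≤ s)
    (hM : G.IsFMatching f M) (hMstar : G.IsFMatching f Mstar)
    (hlong : ∀ W : MWalk V E, IsAugTrail G f M W → s ≤ W.len) :
    ((Mstar.card : ℝ) - M.card ≤ 2 * (∑ v : V, (f v : ℝ)) / ((s : ℝ) - 1)) ∧
    (Real.sqrt (∑ v : V, (f v : ℝ)) + 1 ≤ (s : ℝ) →
      (Mstar.card : ℝ) - M.card ≤ 2 * Real.sqrt (∑ v : V, (f v : ℝ))) := by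
  have hnat := Stmt2Aux.final_nat G f M Mstar s hM hMstar hlong
  have hFeq : (∑ v : V, (f v : ℝ)) = ((∑ v : V, f v : ℕ) : ℝ) := by push_cast; rfl
  have hF0 : (0:ℝ) ≤ ∑ v : V, (f v : ℝ) := Finset.sum_nonneg (fun v _ => by positivity)
  have hs1 : (1:ℝ) ≤ (s:ℝ) - 1 := by
    have : (2:ℝ) ≤ (s:ℝ) := by exact_mod_cast hs
    linarith
  have hsqrt0 : (0:ℝ) ≤ Real.sqrt (∑ v : V, (f v : ℝ)) := Real.sqrt_nonneg _
  by_cases hle : Mstar.card ≤ M.card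
  · have hd0 : (Mstar.card : ℝ) - M.card ≤ 0 := by
      have : (Mstar.card : ℝ) ≤ M.card := by exact_mod_cast hle
      linarith
    constructor
    · have : (0:ℝ) ≤ 2 * (∑ v : V, (f v : ℝ)) / ((s : ℝ) - 1) := by positivity
      linarith
    · intro _
      linarith
  · push_neg at hle
    have hdeq : (Mstar.card : ℝ) - M.card = ((Mstar.card - M.card : ℕ) : ℝ) := by
      rw [Nat.cast_sub hle.le]
    have hkey : ((Mstar.card - M.card : ℕ) : ℝ) * ((s:ℝ) - 1) ≤ ∑ v : V, (f v : ℝ) := by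
      rw [hFeq]
      have h1 : (((Mstar.card - M.card) * (s - 1) : ℕ) : ℝ) ≤ ((∑ v : V, f v : ℕ) : ℝ) := by
        exact_mod_cast hnat
      rw [Nat.cast_mul, Nat.cast_sub (by omega : 1 ≤ s)] at h1
      simpa using h1
    rw [hdeq]
    have hspos : (0:ℝ) < (s:ℝ) - 1 := by linarith
    constructor
    · rw [le_div_iff₀ hspos]
      linarith
    · intro hsq
      have hsle : Real.sqrt (∑ v : V, (f v : ℝ)) ≤ (s:ℝ) - 1 := by linarith
      have hd0 : (0:ℝ) ≤ ((Mstar.card - M.card : ℕ) : ℝ) := Nat.cast_nonneg _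
      by_cases hFz : (∑ v : V, (f v : ℝ)) = 0
      · have h1 : ((Mstar.card - M.card : ℕ) : ℝ) * 1 ≤
            ((Mstar.card - M.card : ℕ) : ℝ) * ((s:ℝ) - 1) :=
          mul_le_mul_of_nonneg_left hs1 hd0
        rw [hFz] at hkey
        linarith
      · have hFpos : (0:ℝ) < ∑ v : V, (f v : ℝ) := lt_of_le_of_ne hF0 (Ne.symm hFz)
        have hsq_pos : (0:ℝ) < Real.sqrt (∑ v : V, (f v : ℝ)) := Real.sqrt_pos.mpr hFpos
        have h1 : ((Mstar.card - M.card : ℕ) : ℝ) * Real.sqrt (∑ v : V, (f v : ℝ))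
            ≤ ((Mstar.card - M.card : ℕ) : ℝ) * ((s:ℝ) - 1) :=
          mul_le_mul_of_nonneg_left hsle hd0
        have h2 : Real.sqrt (∑ v : V, (f v : ℝ)) * Real.sqrt (∑ v : V, (f v : ℝ))
            = ∑ v : V, (f v : ℝ) := Real.mul_self_sqrt hF0
        have h4 : ((Mstar.card - M.card : ℕ) : ℝ) * Real.sqrt (∑ v : V, (f v : ℝ))
            ≤ Real.sqrt (∑ v : V, (f v : ℝ)) * Real.sqrt (∑ v : V, (f v : ℝ)) := by
          linarith
        have h3 := (mul_le_mul_iff_of_pos_right hsq_pos).mp h4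
        linarith
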